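/- Let ν ≥ 1 be an integer and let p be a source with p(1) ≥ 2^{−ν}. Then every codeword-length vector l ∈ ℒ_n with R*(l,p) = R*_opt(p) satisfies l(1) ≤ ν. -/
import Mathlib


/-- A source: a positive, monotonically nonincreasing probability mass function on `Fin n`. -/
def IsSource (n : ℕ) (p : Fin n → ℝ) : Prop :=
  (∀ i, 0 < p i) ∧ (∑ i, p i = 1) ∧ (∀ i j : Fin n, i ≤ j → p j ≤ p i)

/-- A codeword-length vector: positive integer lengths satisfying the Kraft inequality. -/
def IsCLV (n : ℕ) (l : Fin n → ℤ) : Prop :=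
  (∀ i, 1 ≤ l i) ∧ (∑ i, (2:ℝ) ^ (-(l i)) ≤ 1)

/-- Maximum pointwise redundancy `R*(l,p) = max_i (l(i) + lg p(i))`. -/
noncomputable def Rstar (n : ℕ) (l : Fin n → ℤ) (p : Fin n → ℝ) : ℝ :=
  ⨆ i : Fin n, ((l i : ℝ) + Real.logb 2 (p i))

/-- Minimum maximum pointwise redundancy over all codeword-length vectors. -/
noncomputable def RstarOpt (n : ℕ) (p : Fin n → ℝ) : ℝ :=
  sInf {r : ℝ | ∃ l : Fin n → ℤ, IsCLV n l ∧ Rstar n l p = r}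

theorem stmt15 (n : ℕ) (hn : 2 ≤ n) (ν : ℕ) (hν : 1 ≤ ν)
    (p : Fin n → ℝ) (hp : IsSource n p)
    (h1 : (2:ℝ) ^ (-(ν:ℤ)) ≤ p ⟨0, by omega⟩)
    (l : Fin n → ℤ) (hl : IsCLV n l) (hopt : Rstar n l p = RstarOpt n p) :
    l ⟨0, by omega⟩ ≤ (ν:ℤ) := by
  by_contra hcon
  push_neg at hcon
  obtain ⟨hpos, hsum, hmono⟩ := hp
  obtain ⟨hl1, hlk⟩ := hl
  set i0 : Fin n := ⟨0, by omega⟩ with hi0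
  haveI : Nonempty (Fin n) := ⟨i0⟩
  have hbddrange : ∀ (f : Fin n → ℝ), BddAbove (Set.range f) :=
    fun f => (Set.finite_range f).bddAbove
  -- every p i < 1
  have hplt1 : ∀ i, p i < 1 := by
    intro i
    set j : Fin n := if i = i0 then ⟨1, by omega⟩ else i0 with hj
    have hij : i ≠ j := by
      rcases eq_or_ne i i0 with h | h
      · simp [hj, h, i0]
      · simp [hj, h]
    have hsub : ({i, j} : Finset (Fin n)) ⊆ Finset.univ := Finset.subset_univ _
    have h2 : ∑ k ∈ ({i, j} : Finset (Fin n)), p k ≤ ∑ k, p k :=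
      Finset.sum_le_sum_of_subset_of_nonneg hsub (fun k _ _ => (hpos k).le)
    rw [Finset.sum_pair hij, hsum] at h2
    have := hpos j
    linarith
  -- Shannon code
  set L : Fin n → ℤ := fun i => ⌈-Real.logb 2 (p i)⌉ with hL
  have hL1 : ∀ i, 1 ≤ L i := by
    intro i
    have : Real.logb 2 (p i) < 0 := Real.logb_neg one_lt_two (hpos i) (hplt1 i)
    exact Int.ceil_pos.mpr (by linarith)
  have hLkraft : ∀ i, (2:ℝ) ^ (-(L i)) ≤ p i := by
    intro i
    have h1' : -Real.logb 2 (p i) ≤ (L i : ℝ) := Int.le_ceil _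
    have h2' : ((-(L i) : ℤ) : ℝ) ≤ Real.logb 2 (p i) := by push_cast; linarith
    calc (2:ℝ) ^ (-(L i)) = (2:ℝ) ^ (((-(L i) : ℤ)) : ℝ) := (Real.rpow_intCast 2 _).symm
      _ ≤ (2:ℝ) ^ (Real.logb 2 (p i)) := Real.rpow_le_rpow_of_exponent_le one_le_two h2'
      _ = p i := Real.rpow_logb (by norm_num) (by norm_num) (hpos i)
  have hLCLV : IsCLV n L := by
    refine ⟨hL1, ?_⟩
    calc ∑ i, (2:ℝ) ^ (-(L i)) ≤ ∑ i, p i := Finset.sum_le_sum (fun i _ => hLkraft i)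
      _ = 1 := hsum
  -- Rstar of Shannon code < 1
  have hRL : Rstar n L p < 1 := by
    obtain ⟨j, hj⟩ := exists_eq_ciSup_of_finite
      (f := fun i : Fin n => ((L i : ℝ) + Real.logb 2 (p i)))
    rw [Rstar, ← hj]
    have : ((L j : ℝ)) < -Real.logb 2 (p j) + 1 := by
      exact_mod_cast Int.ceil_lt_add_one (-Real.logb 2 (p j))
    linarith
  -- RstarOpt bounded below, hence ≤ Rstar L p
  have hmem : Rstar n L p ∈ {r : ℝ | ∃ l : Fin n → ℤ, IsCLV n l ∧ Rstar n l p = r} :=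
    ⟨L, hLCLV, rfl⟩
  have hbdd : BddBelow {r : ℝ | ∃ l : Fin n → ℤ, IsCLV n l ∧ Rstar n l p = r} := by
    refine ⟨1 + Real.logb 2 (p i0), ?_⟩
    rintro r ⟨l', ⟨hl'1, _⟩, rfl⟩
    have h0 : ((l' i0 : ℝ)) + Real.logb 2 (p i0) ≤ Rstar n l' p := by
      rw [Rstar]
      exact le_ciSup (f := fun i => ((l' i : ℝ) + Real.logb 2 (p i))) (hbddrange _) i0
    have : (1:ℝ) ≤ (l' i0 : ℝ) := by exact_mod_cast hl'1 i0
    linarith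
  have hopt_lt : RstarOpt n p < 1 := lt_of_le_of_lt (csInf_le hbdd hmem) hRL
  -- but Rstar l p ≥ 1
  have hlogp : -(ν:ℝ) ≤ Real.logb 2 (p i0) := by
    have h2 : Real.logb 2 ((2:ℝ) ^ (-(ν:ℤ))) ≤ Real.logb 2 (p i0) :=
      (Real.logb_le_logb one_lt_two (by positivity) (hpos i0)).mpr h1
    rwa [← Real.rpow_intCast, Real.logb_rpow (by norm_num) (by norm_num), Int.cast_neg,
      Int.cast_natCast] at h2
  have hge : (1:ℝ) ≤ Rstar n l p := by
    have h0 : ((l i0 : ℝ)) + Real.logb 2 (p i0) ≤ Rstar n l p := by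
      rw [Rstar]
      exact le_ciSup (f := fun i => ((l i : ℝ) + Real.logb 2 (p i))) (hbddrange _) i0
    have : ((ν:ℝ) + 1) ≤ (l i0 : ℝ) := by exact_mod_cast hcon
    linarith
  rw [hopt] at hge
  linarith
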